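/- Let E_1,...,E_k be linear subspaces of R^n and c_1,...,c_k > 0 with ∑ c_i P_{E_i} = I_n, and let Φ : R^n → R^n be a positive definite symmetric linear map all of whose eigenspaces are critical subspaces of the data. Then for every x ∈ R^n, ‖Φx‖² = min { ∑_{i=1}^k c_i ‖Φ x_i‖² : x = ∑_{i=1}^k c_i x_i, x_i ∈ E_i }, and the minimum is attained at x_i = P_{E_i} x. -/

import Mathlib

set_option maxHeartbeats 1000000
open scoped BigOperators RealInnerProductSpace
open Module

variable {n : ℕ}
local notation "M" => EuclideanSpace ℝ (Fin n)

noncomputable def Pfull (K : Submodule ℝ (EuclideanSpace ℝ (Fin n))) :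
    EuclideanSpace ℝ (Fin n) →ₗ[ℝ] EuclideanSpace ℝ (Fin n) :=
  K.subtype ∘ₗ (Submodule.orthogonalProjectionOnto K).toLinearMap

@[simp] lemma Pfull_apply (K : Submodule ℝ (EuclideanSpace ℝ (Fin n))) (x : M) :
    Pfull K x = (Submodule.orthogonalProjectionOnto K x : M) := rfl

lemma trace_eq_sum_inner' {ι : Type*} [Fintype ι] [DecidableEq ι]
    {F : Type*} [NormedAddCommGroup F] [InnerProductSpace ℝ F] [FiniteDimensional ℝ F]
    (b : OrthonormalBasis ι ℝ F) (f : F →ₗ[ℝ] F) :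
    LinearMap.trace ℝ F f = ∑ i, ⟪b i, f (b i)⟫ := by
  rw [LinearMap.trace_eq_matrix_trace ℝ b.toBasis, Matrix.trace]
  simp [Matrix.diag, LinearMap.toMatrix_apply, OrthonormalBasis.coe_toBasis_repr_apply,
    OrthonormalBasis.repr_apply_apply, OrthonormalBasis.coe_toBasis]

lemma inner_proj_self (K : Submodule ℝ (EuclideanSpace ℝ (Fin n))) (x : M) :
    ⟪x, (Submodule.orthogonalProjectionOnto K x : M)⟫ = ‖(Submodule.orthogonalProjectionOnto K x : M)‖ ^ 2 := by
  have h0 : ⟪x - (Submodule.orthogonalProjectionOnto K x : M), (Submodule.orthogonalProjectionOnto K x : M)⟫ = 0 :=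
    Submodule.inner_left_of_mem_orthogonal (Submodule.coe_mem _)
      (Submodule.sub_starProjection_mem_orthogonal x)
  rw [inner_sub_left, sub_eq_zero] at h0
  rw [h0, real_inner_self_eq_norm_sq]

/-- adapted trace computation -/
lemma trace_proj_comp_proj (Ej V : Submodule ℝ (EuclideanSpace ℝ (Fin n))) :
    ∃ s : ℝ, 0 ≤ s ∧
      LinearMap.trace ℝ M (Pfull Ej ∘ₗ Pfull V) = (finrank ℝ ↥(Ej ⊓ V) : ℝ) + s ∧
      (s = 0 → ∀ w ∈ (Ej ⊓ V)ᗮ ⊓ V, (Submodule.orthogonalProjectionOnto Ej w : M) = 0) ∧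
      LinearMap.trace ℝ M (Pfull V) = (finrank ℝ ↥V : ℝ) := by
  set U : Submodule ℝ M := Ej ⊓ V with hU
  set W : Submodule ℝ M := Uᗮ ⊓ V with hW
  have hUV : U ≤ V := inf_le_right
  have hUW : U ⊔ W = V := Submodule.sup_orthogonal_inf_of_hasOrthogonalProjection hUV
  set V3 : Fin 3 → Submodule ℝ M := ![U, W, Vᗮ] with hV3
  have h01 : U ⟂ W := (Submodule.isOrtho_orthogonal_right U).mono_right inf_le_left
  have h02 : U ⟂ Vᗮ := (Submodule.isOrtho_orthogonal_right V).mono_left hUV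
  have h12 : W ⟂ Vᗮ := (Submodule.isOrtho_orthogonal_right V).mono_left inf_le_right
  have hortho : OrthogonalFamily ℝ (fun a => ↥(V3 a)) (fun a => (V3 a).subtypeₗᵢ) := by
    intro a b hab
    fin_cases a <;> fin_cases b <;> simp only [ne_eq, not_true_eq_false] at hab ⊢ <;>
      intro x y <;>
      simp only [Submodule.coe_subtypeₗᵢ, Submodule.coe_subtype]
    · exact h01.inner_eq x.2 y.2
    · exact h02.inner_eq x.2 y.2
    · exact h01.symm.inner_eq x.2 y.2
    · exact h12.inner_eq x.2 y.2
    · exact h02.symm.inner_eq x.2 y.2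
    · exact h12.symm.inner_eq x.2 y.2
  have htop : (⨆ a, V3 a) = ⊤ := by
    refine top_unique ?_
    have hVtop : V ⊔ Vᗮ = ⊤ := Submodule.sup_orthogonal_of_hasOrthogonalProjection
    have l2 : V ≤ ⨆ a, V3 a := by
      rw [← hUW]; exact sup_le (le_iSup V3 0) (le_iSup V3 1)
    rw [← hVtop]
    exact sup_le l2 (le_iSup V3 2)
  have hint : DirectSum.IsInternal V3 :=
    hortho.isInternal_iff.mpr (by rw [htop, Submodule.top_orthogonal_eq_bot])
  set B := hint.collectedOrthonormalBasis hortho (fun a => stdOrthonormalBasis ℝ ↥(V3 a)) with hB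
  have hBcoe : ∀ σ : Σ a : Fin 3, Fin (finrank ℝ ↥(V3 a)),
      (B σ : M) = ↑(stdOrthonormalBasis ℝ ↥(V3 σ.1) σ.2) := by
    intro σ
    simp [hB, DirectSum.IsInternal.collectedOrthonormalBasis]
  have hBmem : ∀ σ : Σ a : Fin 3, Fin (finrank ℝ ↥(V3 a)), B σ ∈ V3 σ.1 :=
    fun σ => hint.collectedOrthonormalBasis_mem hortho _ σ
  have hBnorm : ∀ σ, ‖B σ‖ = 1 := fun σ => B.orthonormal.1 σ
  -- membership facts
  have hmem0 : ∀ s : Fin (finrank ℝ ↥(V3 0)), B ⟨0, s⟩ ∈ U := fun s => hBmem ⟨0, s⟩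
  have hmem1 : ∀ s : Fin (finrank ℝ ↥(V3 1)), B ⟨1, s⟩ ∈ W := fun s => hBmem ⟨1, s⟩
  have hmem2 : ∀ s : Fin (finrank ℝ ↥(V3 2)), B ⟨2, s⟩ ∈ Vᗮ := fun s => hBmem ⟨2, s⟩
  refine ⟨∑ s : Fin (finrank ℝ ↥(V3 1)), ‖(Submodule.orthogonalProjectionOnto Ej (B ⟨1, s⟩) : M)‖ ^ 2,
    Finset.sum_nonneg fun s _ => by positivity, ?_, ?_, ?_⟩
  · rw [trace_eq_sum_inner' B, ← Finset.univ_sigma_univ, Finset.sum_sigma, Fin.sum_univ_three]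
    have e0 : ∀ s : Fin (finrank ℝ ↥(V3 0)),
        ⟪B ⟨0, s⟩, (Pfull Ej ∘ₗ Pfull V) (B ⟨0, s⟩)⟫ = 1 := by
      intro s
      have h1 : (Submodule.orthogonalProjectionOnto V (B ⟨0, s⟩) : M) = B ⟨0, s⟩ :=
        Submodule.starProjection_eq_self_iff.mpr (hUV (hmem0 s))
      have h2 : (Submodule.orthogonalProjectionOnto Ej (B ⟨0, s⟩) : M) = B ⟨0, s⟩ :=
        Submodule.starProjection_eq_self_iff.mpr ((hmem0 s).1)
      simp only [LinearMap.comp_apply, Pfull_apply, h1, h2]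
      rw [real_inner_self_eq_norm_sq, hBnorm]; norm_num
    have e1 : ∀ s : Fin (finrank ℝ ↥(V3 1)),
        ⟪B ⟨1, s⟩, (Pfull Ej ∘ₗ Pfull V) (B ⟨1, s⟩)⟫
          = ‖(Submodule.orthogonalProjectionOnto Ej (B ⟨1, s⟩) : M)‖ ^ 2 := by
      intro s
      have h1 : (Submodule.orthogonalProjectionOnto V (B ⟨1, s⟩) : M) = B ⟨1, s⟩ :=
        Submodule.starProjection_eq_self_iff.mpr ((hmem1 s).2)
      simp only [LinearMap.comp_apply, Pfull_apply, h1]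
      exact inner_proj_self Ej _
    have e2 : ∀ s : Fin (finrank ℝ ↥(V3 2)),
        ⟪B ⟨2, s⟩, (Pfull Ej ∘ₗ Pfull V) (B ⟨2, s⟩)⟫ = 0 := by
      intro s
      have h1 : Submodule.orthogonalProjectionOnto V (B ⟨2, s⟩) = 0 :=
        Submodule.orthogonalProjectionOnto_apply_of_mem_orthogonal (hmem2 s)
      simp [LinearMap.comp_apply, Pfull_apply, h1]
    rw [Finset.sum_congr rfl (fun s _ => e0 s), Finset.sum_congr rfl (fun s _ => e1 s),
      Finset.sum_congr rfl (fun s _ => e2 s)]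
    have h00 : finrank ℝ ↥(V3 0) = finrank ℝ ↥(Ej ⊓ V) := rfl
    simp [h00]
    rfl
  · intro hs0 w hw
    -- each basis vector of W is killed by the projection
    have hz : ∀ s : Fin (finrank ℝ ↥(V3 1)), (Submodule.orthogonalProjectionOnto Ej (B ⟨1, s⟩) : M) = 0 := by
      intro s
      have := (Finset.sum_eq_zero_iff_of_nonneg (fun s _ => by positivity)).mp hs0 s
        (Finset.mem_univ s)
      have hn : ‖(Submodule.orthogonalProjectionOnto Ej (B ⟨1, s⟩) : M)‖ = 0 := by
        nlinarith [norm_nonneg ((Submodule.orthogonalProjectionOnto Ej (B ⟨1, s⟩) : M))]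
      simpa using hn
    -- W is contained in the kernel of Pfull Ej
    have hWker : W ≤ LinearMap.ker (Pfull Ej) := by
      have hspan2 : Submodule.span ℝ (Set.range ⇑(stdOrthonormalBasis ℝ ↥(V3 1)))
          = (⊤ : Submodule ℝ ↥(V3 1)) := by
        rw [← (stdOrthonormalBasis ℝ ↥(V3 1)).coe_toBasis]
        exact Basis.span_eq _
      have himg : (Set.range fun s : Fin (finrank ℝ ↥(V3 1)) => (B ⟨1, s⟩ : M))
          = ((V3 1).subtype '' Set.range ⇑(stdOrthonormalBasis ℝ ↥(V3 1))) := by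
        rw [← Set.range_comp]
        exact congrArg Set.range (funext fun s => hBcoe ⟨1, s⟩)
      have hspan : Submodule.span ℝ (Set.range fun s : Fin (finrank ℝ ↥(V3 1)) =>
          (B ⟨1, s⟩ : M)) = W := by
        rw [himg, Submodule.span_image, hspan2, Submodule.map_top, Submodule.range_subtype]
        rfl
      rw [← hspan, Submodule.span_le]
      rintro _ ⟨s, rfl⟩
      simp [LinearMap.mem_ker, hz s]
    have hwW : w ∈ W := ⟨hw.1, hw.2⟩
    have := hWker hwW
    simpa using this
  · rw [trace_eq_sum_inner' B, ← Finset.univ_sigma_univ, Finset.sum_sigma, Fin.sum_univ_three]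
    have e0 : ∀ s : Fin (finrank ℝ ↥(V3 0)), ⟪B ⟨0, s⟩, Pfull V (B ⟨0, s⟩)⟫ = 1 := by
      intro s
      have h1 : (Submodule.orthogonalProjectionOnto V (B ⟨0, s⟩) : M) = B ⟨0, s⟩ :=
        Submodule.starProjection_eq_self_iff.mpr (hUV (hmem0 s))
      simp only [Pfull_apply, h1]
      rw [real_inner_self_eq_norm_sq, hBnorm]; norm_num
    have e1 : ∀ s : Fin (finrank ℝ ↥(V3 1)), ⟪B ⟨1, s⟩, Pfull V (B ⟨1, s⟩)⟫ = 1 := by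
      intro s
      have h1 : (Submodule.orthogonalProjectionOnto V (B ⟨1, s⟩) : M) = B ⟨1, s⟩ :=
        Submodule.starProjection_eq_self_iff.mpr ((hmem1 s).2)
      simp only [Pfull_apply, h1]
      rw [real_inner_self_eq_norm_sq, hBnorm]; norm_num
    have e2 : ∀ s : Fin (finrank ℝ ↥(V3 2)), ⟪B ⟨2, s⟩, Pfull V (B ⟨2, s⟩)⟫ = 0 := by
      intro s
      have h1 : Submodule.orthogonalProjectionOnto V (B ⟨2, s⟩) = 0 :=
        Submodule.orthogonalProjectionOnto_apply_of_mem_orthogonal (hmem2 s)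
      simp [Pfull_apply, h1]
    rw [Finset.sum_congr rfl (fun s _ => e0 s), Finset.sum_congr rfl (fun s _ => e1 s),
      Finset.sum_congr rfl (fun s _ => e2 s)]
    have hdim : finrank ℝ ↥U + finrank ℝ ↥W = finrank ℝ ↥V :=
      Submodule.finrank_add_inf_finrank_orthogonal hUV
    have h0 : finrank ℝ ↥(V3 0) = finrank ℝ ↥U := rfl
    have h1 : finrank ℝ ↥(V3 1) = finrank ℝ ↥W := rfl
    simp only [Finset.sum_const, Finset.card_univ, Fintype.card_fin, nsmul_eq_mul, mul_one,
      Finset.sum_const_zero, add_zero, h0, h1]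
    push_cast [← hdim]
    ring

lemma crit_invariant {k : ℕ} (E : Fin k → Submodule ℝ (EuclideanSpace ℝ (Fin n)))
    (c : Fin k → ℝ) (hc : ∀ i, 0 < c i)
    (hBL : ∀ x : EuclideanSpace ℝ (Fin n),
      ∑ i, c i • ((Submodule.orthogonalProjectionOnto (E i) x : EuclideanSpace ℝ (Fin n))) = x)
    (V : Submodule ℝ (EuclideanSpace ℝ (Fin n)))
    (hV : (∑ i, c i * (Module.finrank ℝ ↥(E i ⊓ V) : ℝ)) = (Module.finrank ℝ ↥V : ℝ))
    (i : Fin k) {v : EuclideanSpace ℝ (Fin n)} (hv : v ∈ V) :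
    (Submodule.orthogonalProjectionOnto (E i) v : EuclideanSpace ℝ (Fin n)) ∈ V := by
  choose s hs0 htr hker htrV using fun j => trace_proj_comp_proj (E j) V
  -- sum of traces
  have hsumop : ∑ j, c j • (Pfull (E j) ∘ₗ Pfull V) = Pfull V :=
    LinearMap.ext fun x => by simpa using hBL (Pfull V x)
  have hsumtr : ∑ j, c j * LinearMap.trace ℝ M (Pfull (E j) ∘ₗ Pfull V)
      = (finrank ℝ ↥V : ℝ) := by
    have h1 : LinearMap.trace ℝ M (∑ j, c j • (Pfull (E j) ∘ₗ Pfull V))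
        = ∑ j, c j * LinearMap.trace ℝ M (Pfull (E j) ∘ₗ Pfull V) := by
      rw [map_sum]
      exact Finset.sum_congr rfl fun j _ => by simp [smul_eq_mul]
    rw [← h1, hsumop, htrV i]
  have hzero : ∑ j, c j * s j = 0 := by
    have : ∑ j, c j * ((finrank ℝ ↥(E j ⊓ V) : ℝ) + s j) = (finrank ℝ ↥V : ℝ) := by
      rw [← hsumtr]
      exact Finset.sum_congr rfl fun j _ => by rw [htr j]
    have hexp : ∑ j, c j * ((finrank ℝ ↥(E j ⊓ V) : ℝ) + s j)
        = (∑ j, c j * (finrank ℝ ↥(E j ⊓ V) : ℝ)) + ∑ j, c j * s j := by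
      rw [← Finset.sum_add_distrib]
      exact Finset.sum_congr rfl fun j _ => by ring
    rw [hexp, hV] at this
    linarith
  have hsi : s i = 0 := by
    have hterm : ∀ j ∈ Finset.univ, 0 ≤ c j * s j :=
      fun j _ => mul_nonneg (hc j).le (hs0 j)
    have := (Finset.sum_eq_zero_iff_of_nonneg hterm).mp hzero i (Finset.mem_univ i)
    have hci := hc i
    nlinarith [hs0 i]
  -- decompose v
  have hUW : (E i ⊓ V) ⊔ ((E i ⊓ V)ᗮ ⊓ V) = V :=
    Submodule.sup_orthogonal_inf_of_hasOrthogonalProjection inf_le_right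
  rw [← hUW] at hv
  obtain ⟨u, hu, w, hw, rfl⟩ := Submodule.mem_sup.mp hv
  have hpu : (Submodule.orthogonalProjectionOnto (E i) u : M) = u :=
    Submodule.starProjection_eq_self_iff.mpr hu.1
  have hpw : (Submodule.orthogonalProjectionOnto (E i) w : M) = 0 := hker i hsi w hw
  have : (Submodule.orthogonalProjectionOnto (E i) (u + w) : M) = u := by
    rw [map_add]
    push_cast
    rw [hpu, hpw, add_zero]
  rw [this]
  exact hUW ▸ Submodule.mem_sup_left hu

lemma inner_proj_right (K : Submodule ℝ (EuclideanSpace ℝ (Fin n))) {u : EuclideanSpace ℝ (Fin n)}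
    (hu : u ∈ K) (y : EuclideanSpace ℝ (Fin n)) :
    ⟪u, y⟫ = ⟪u, (Submodule.orthogonalProjectionOnto K y : EuclideanSpace ℝ (Fin n))⟫ := by
  have h0 : ⟪u, y - (Submodule.orthogonalProjectionOnto K y : M)⟫ = 0 :=
    Submodule.inner_right_of_mem_orthogonal hu (Submodule.sub_starProjection_mem_orthogonal y)
  rw [inner_sub_right, sub_eq_zero] at h0
  exact h0

lemma proj_comm {k : ℕ} (E : Fin k → Submodule ℝ (EuclideanSpace ℝ (Fin n)))
    (c : Fin k → ℝ) (hc : ∀ i, 0 < c i)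
    (hBL : ∀ x : EuclideanSpace ℝ (Fin n),
      ∑ i, c i • ((Submodule.orthogonalProjectionOnto (E i) x : EuclideanSpace ℝ (Fin n))) = x)
    (Φ : EuclideanSpace ℝ (Fin n) →ₗ[ℝ] EuclideanSpace ℝ (Fin n))
    (hsym : ∀ x y, (inner ℝ (Φ x) y : ℝ) = inner ℝ x (Φ y))
    (heig : ∀ μ : ℝ, Module.End.eigenspace Φ μ ≠ ⊥ →
      Module.End.eigenspace Φ μ ≠ ⊥ ∧
        (∑ i, c i * (Module.finrank ℝ ↥(E i ⊓ Module.End.eigenspace Φ μ) : ℝ))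
          = (Module.finrank ℝ ↥(Module.End.eigenspace Φ μ) : ℝ))
    (i : Fin k) (x : EuclideanSpace ℝ (Fin n)) :
    (Submodule.orthogonalProjectionOnto (E i) (Φ x) : EuclideanSpace ℝ (Fin n))
      = Φ (Submodule.orthogonalProjectionOnto (E i) x : EuclideanSpace ℝ (Fin n)) := by
  have hsymm : Φ.IsSymmetric := hsym
  have hspan : (⨆ μ, Module.End.eigenspace Φ μ) = ⊤ :=
    Submodule.orthogonal_eq_bot_iff.mp hsymm.orthogonalComplement_iSup_eigenspaces_eq_bot
  have hloc : ∀ μ : ℝ, Module.End.eigenspace Φ μ ≤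
      LinearMap.eqLocus (Pfull (E i) ∘ₗ Φ) (Φ ∘ₗ Pfull (E i)) := by
    intro μ v hvμ
    by_cases hμ : Module.End.eigenspace Φ μ = ⊥
    · have hv0 : v = 0 := by simpa [hμ] using hvμ
      simp [LinearMap.mem_eqLocus, hv0]
    · obtain ⟨-, hcrit⟩ := heig μ hμ
      have hPmem : (Submodule.orthogonalProjectionOnto (E i) v : M) ∈ Module.End.eigenspace Φ μ :=
        crit_invariant E c hc hBL _ hcrit i hvμ
      have hv : Φ v = μ • v := Module.End.mem_eigenspace_iff.mp hvμ
      have hPv : Φ (Submodule.orthogonalProjectionOnto (E i) v : M)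
          = μ • (Submodule.orthogonalProjectionOnto (E i) v : M) := Module.End.mem_eigenspace_iff.mp hPmem
      show (Pfull (E i) ∘ₗ Φ) v = (Φ ∘ₗ Pfull (E i)) v
      simp only [LinearMap.comp_apply, Pfull_apply, hv, hPv]
      rw [map_smul]
      push_cast
      rfl
  have htop : LinearMap.eqLocus (Pfull (E i) ∘ₗ Φ) (Φ ∘ₗ Pfull (E i)) = ⊤ :=
    top_unique (hspan ▸ iSup_le hloc)
  have hx := (Submodule.eq_top_iff'.mp htop) x
  have := LinearMap.mem_eqLocus.mp hx
  simpa using this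

/-- A nonzero subspace `V` is critical for the data `(E, c)` if
`∑ i, c i · dim (E i ⊓ V) = dim V`. -/
def IsCritical {n k : ℕ} (E : Fin k → Submodule ℝ (EuclideanSpace ℝ (Fin n)))
    (c : Fin k → ℝ) (V : Submodule ℝ (EuclideanSpace ℝ (Fin n))) : Prop :=
  V ≠ ⊥ ∧ (∑ i, c i * (Module.finrank ℝ ↥(E i ⊓ V) : ℝ)) = (Module.finrank ℝ V : ℝ)

theorem stmt13 {n k : ℕ} (E : Fin k → Submodule ℝ (EuclideanSpace ℝ (Fin n)))
    (c : Fin k → ℝ) (hc : ∀ i, 0 < c i)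
    (hBL : ∀ x : EuclideanSpace ℝ (Fin n),
      ∑ i, c i • ((Submodule.orthogonalProjectionOnto (E i) x : EuclideanSpace ℝ (Fin n))) = x)
    (Φ : EuclideanSpace ℝ (Fin n) →ₗ[ℝ] EuclideanSpace ℝ (Fin n))
    (hsym : ∀ x y, (inner ℝ (Φ x) y : ℝ) = inner ℝ x (Φ y))
    (hpos : ∀ x, x ≠ 0 → 0 < (inner ℝ (Φ x) x : ℝ))
    (heig : ∀ μ : ℝ, Module.End.eigenspace Φ μ ≠ ⊥ →
      IsCritical E c (Module.End.eigenspace Φ μ)) :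
    ∀ x : EuclideanSpace ℝ (Fin n),
      (∀ xi : Fin k → EuclideanSpace ℝ (Fin n), (∀ i, xi i ∈ E i) →
        x = ∑ i, c i • xi i → ‖Φ x‖ ^ 2 ≤ ∑ i, c i * ‖Φ (xi i)‖ ^ 2) ∧
      ‖Φ x‖ ^ 2 =
        ∑ i, c i * ‖Φ ((Submodule.orthogonalProjectionOnto (E i) x : EuclideanSpace ℝ (Fin n)))‖ ^ 2 := by
  intro x
  have hcomm : ∀ (i : Fin k) (y : EuclideanSpace ℝ (Fin n)),
      (Submodule.orthogonalProjectionOnto (E i) (Φ y) : EuclideanSpace ℝ (Fin n))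
        = Φ (Submodule.orthogonalProjectionOnto (E i) y : EuclideanSpace ℝ (Fin n)) :=
    fun i y => proj_comm E c hc hBL Φ hsym (fun μ hμ => heig μ hμ) i y
  have hnorm : ∀ y : EuclideanSpace ℝ (Fin n),
      ‖Φ y‖ ^ 2 = ∑ i, c i *
        ‖(Submodule.orthogonalProjectionOnto (E i) (Φ y) : EuclideanSpace ℝ (Fin n))‖ ^ 2 := by
    intro y
    have h1 : ⟪Φ y, Φ y⟫ = ∑ i, c i *
        ⟪(Submodule.orthogonalProjectionOnto (E i) (Φ y) : EuclideanSpace ℝ (Fin n)), Φ y⟫ := by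
      have h1' : ⟪(∑ i, c i • ((Submodule.orthogonalProjectionOnto (E i) (Φ y)
          : EuclideanSpace ℝ (Fin n)))), Φ y⟫ = ⟪Φ y, Φ y⟫ := by rw [hBL (Φ y)]
      rw [← h1', sum_inner]
      exact Finset.sum_congr rfl fun i _ => by rw [real_inner_smul_left]
    rw [← real_inner_self_eq_norm_sq, h1]
    exact Finset.sum_congr rfl fun i _ => by rw [real_inner_comm, inner_proj_self]
  refine ⟨?_, by rw [hnorm x]; exact Finset.sum_congr rfl fun i _ => by rw [hcomm i x]⟩
  intro xi hxi hxsum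
  set pr : Fin k → ℝ :=
    fun i => ‖(Submodule.orthogonalProjectionOnto (E i) (Φ x) : EuclideanSpace ℝ (Fin n))‖ with hpr
  have hineq1 : ‖Φ x‖ ^ 2 ≤ ∑ i, c i * (‖Φ (xi i)‖ * pr i) := by
    have e1 : ⟪Φ x, Φ x⟫ = ∑ i, c i *
        ⟪Φ (xi i), (Submodule.orthogonalProjectionOnto (E i) (Φ x) : EuclideanSpace ℝ (Fin n))⟫ := by
      rw [hsym x (Φ x)]
      nth_rewrite 1 [hxsum]
      rw [sum_inner]
      refine Finset.sum_congr rfl fun i _ => ?_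
      rw [real_inner_smul_left]
      congr 1
      calc ⟪xi i, Φ (Φ x)⟫
          = ⟪xi i, (Submodule.orthogonalProjectionOnto (E i) (Φ (Φ x)) : EuclideanSpace ℝ (Fin n))⟫ :=
            inner_proj_right (E i) (hxi i) _
        _ = ⟪xi i, Φ ((Submodule.orthogonalProjectionOnto (E i) (Φ x) : EuclideanSpace ℝ (Fin n)))⟫ := by
            rw [hcomm i (Φ x)]
        _ = ⟪Φ (xi i), (Submodule.orthogonalProjectionOnto (E i) (Φ x) : EuclideanSpace ℝ (Fin n))⟫ :=
            (hsym (xi i) _).symm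
    rw [← real_inner_self_eq_norm_sq, e1]
    refine Finset.sum_le_sum fun i _ => ?_
    exact mul_le_mul_of_nonneg_left (real_inner_le_norm _ _) (hc i).le
  have hCS : (∑ i, c i * (‖Φ (xi i)‖ * pr i)) ^ 2
      ≤ (∑ i, c i * ‖Φ (xi i)‖ ^ 2) * (∑ i, c i * pr i ^ 2) := by
    have h := Finset.sum_mul_sq_le_sq_mul_sq Finset.univ
      (fun i => Real.sqrt (c i) * ‖Φ (xi i)‖) (fun i => Real.sqrt (c i) * pr i)
    have e2 : ∀ i : Fin k,
        (Real.sqrt (c i) * ‖Φ (xi i)‖) * (Real.sqrt (c i) * pr i)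
          = c i * (‖Φ (xi i)‖ * pr i) := by
      intro i
      have h5 : Real.sqrt (c i) * Real.sqrt (c i) = c i := Real.mul_self_sqrt (hc i).le
      rw [mul_mul_mul_comm, h5]
    have e3 : ∀ i : Fin k, (Real.sqrt (c i) * ‖Φ (xi i)‖) ^ 2 = c i * ‖Φ (xi i)‖ ^ 2 := by
      intro i
      rw [mul_pow, Real.sq_sqrt (hc i).le]
    have e4 : ∀ i : Fin k, (Real.sqrt (c i) * pr i) ^ 2 = c i * pr i ^ 2 := by
      intro i
      rw [mul_pow, Real.sq_sqrt (hc i).le]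
    rw [Finset.sum_congr rfl (fun i _ => e2 i), Finset.sum_congr rfl (fun i _ => e3 i),
      Finset.sum_congr rfl (fun i _ => e4 i)] at h
    exact h
  have hP : ∑ i, c i * pr i ^ 2 = ‖Φ x‖ ^ 2 := (hnorm x).symm
  rw [hP] at hCS
  have hS0 : 0 ≤ ∑ i, c i * ‖Φ (xi i)‖ ^ 2 :=
    Finset.sum_nonneg fun i _ => mul_nonneg (hc i).le (by positivity)
  rcases eq_or_lt_of_le (by positivity : (0:ℝ) ≤ ‖Φ x‖ ^ 2) with h0 | h0
  · linarith
  · nlinarith
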